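/- Let α ∈ (1/2, 1), T > 0, a ≥ 0, b ≥ 0, and let u : [0, T] → [0, ∞) be measurable and bounded, satisfying u(t) ≤ a + b ∫_0^t (t − τ)^{2α−2} u(τ) dτ for all t ∈ [0, T]. Then for every γ > b · Γ(2α − 1), one has sup_{t ∈ [0, T]} u(t) ≤ (a / (1 − b Γ(2α − 1)/γ)) · E_{2α−1}(γ T^{2α−1}). -/

import Mathlib

set_option maxHeartbeats 2000000

/-- The Mittag-Leffler function `E_β(x) = ∑_{k=0}^∞ x^k / Γ(β k + 1)`. -/
noncomputable def mittagLeffler (β x : ℝ) : ℝ :=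
  ∑' k : ℕ, x ^ k / Real.Gamma (β * k + 1)

open MeasureTheory intervalIntegral in
/-- Real beta-type integral. -/
lemma betaInt {p s t : ℝ} (hp : 0 < p) (hs : 0 < s) (ht : 0 < t) :
    ∫ τ in (0:ℝ)..t, (t - τ) ^ (p - 1) * τ ^ (s - 1) =
      Real.Gamma p * Real.Gamma s / Real.Gamma (p + s) * t ^ (p + s - 1) := by
  have key : ((∫ τ in (0:ℝ)..t, (t - τ) ^ (p - 1) * τ ^ (s - 1) : ℝ) : ℂ)
      = ∫ τ in (0:ℝ)..t, (τ:ℂ) ^ ((s:ℂ) - 1) * ((t:ℂ) - τ) ^ ((p:ℂ) - 1) := by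
    rw [← intervalIntegral.integral_ofReal]
    apply intervalIntegral.integral_congr
    intro τ hτ
    rw [Set.uIcc_of_le ht.le] at hτ
    simp only []
    rw [Complex.ofReal_mul, Complex.ofReal_cpow (by linarith [hτ.2] : (0:ℝ) ≤ t - τ),
      Complex.ofReal_cpow hτ.1]
    push_cast
    ring
  have h2 := Complex.betaIntegral_scaled (s:ℂ) (p:ℂ) ht
  have h3 := Complex.Gamma_mul_Gamma_eq_betaIntegral
    (s := (s:ℂ)) (t := (p:ℂ)) (by simpa using hs) (by simpa using hp)
  have hΓ : Complex.Gamma ((s:ℂ) + (p:ℂ)) ≠ 0 := by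
    rw [← Complex.ofReal_add, Complex.Gamma_ofReal]
    exact_mod_cast (Real.Gamma_pos_of_pos (by linarith)).ne'
  have h4 : Complex.betaIntegral (s:ℂ) (p:ℂ)
      = Complex.Gamma s * Complex.Gamma p / Complex.Gamma ((s:ℂ) + p) := by
    field_simp [h3]
    linear_combination -h3
  rw [h2, h4] at key
  have := key
  rw [← Complex.ofReal_add, ← Complex.ofReal_one, ← Complex.ofReal_sub,
    ← Complex.ofReal_cpow ht.le, Complex.Gamma_ofReal, Complex.Gamma_ofReal,
    Complex.Gamma_ofReal] at this
  have : ((∫ τ in (0:ℝ)..t, (t - τ) ^ (p - 1) * τ ^ (s - 1) : ℝ) : ℂ)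
      = ((t ^ (s + p - 1) * (Real.Gamma s * Real.Gamma p / Real.Gamma (s + p)) : ℝ) : ℂ) := by
    rw [this]; push_cast; ring
  have := Complex.ofReal_inj.mp this
  rw [this]; rw [add_comm s p]; ring

lemma kernelInt {p q t : ℝ} (hp : 0 < p) (hq : 0 ≤ q) :
    IntervalIntegrable (fun τ => (t - τ) ^ (p - 1) * τ ^ q) MeasureTheory.volume 0 t := by
  have h1 : IntervalIntegrable (fun x : ℝ => x ^ (p - 1)) MeasureTheory.volume 0 t :=
    intervalIntegral.intervalIntegrable_rpow' (by linarith)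
  have h2 := (h1.comp_sub_left t).symm
  simp only [sub_zero, sub_self] at h2
  apply h2.mul_continuousOn
  rcases eq_or_lt_of_le hq with h | h
  · subst h; simp only [Real.rpow_zero]; exact continuousOn_const
  · exact (continuous_iff_continuousAt.2 fun x =>
      Real.continuousAt_rpow_const x q (Or.inr hq)).continuousOn

lemma gammaRatio {β y : ℝ} (hβ : 0 < β) (hβ1 : β ≤ 1) (hy : 1 ≤ y) :
    Real.Gamma y * (y ^ β * 2 ^ (β - 1)) ≤ Real.Gamma (y + β) := by
  have hy0 : (0:ℝ) < y := lt_of_lt_of_le one_pos hy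
  have hΓy : 0 < Real.Gamma y := Real.Gamma_pos_of_pos hy0
  have hΓx : 0 < Real.Gamma (y + β) := Real.Gamma_pos_of_pos (by linarith)
  have hcv := Real.convexOn_log_Gamma.2 (Set.mem_Ioi.2 (by linarith : (0:ℝ) < y + β))
    (Set.mem_Ioi.2 (by linarith : (0:ℝ) < y + β + 1)) hβ.le (by linarith : (0:ℝ) ≤ 1 - β)
    (by ring)
  have hpt : β • (y + β) + (1 - β) • (y + β + 1) = y + 1 := by simp [smul_eq_mul]; ring
  rw [hpt] at hcv
  simp only [Function.comp_apply, smul_eq_mul] at hcv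
  rw [Real.Gamma_add_one (by positivity : y ≠ 0),
    Real.Gamma_add_one (by positivity : y + β ≠ 0)] at hcv
  rw [Real.log_mul (by positivity) hΓy.ne', Real.log_mul (by positivity) hΓx.ne'] at hcv
  -- hcv : log y + log Γ y ≤ β * log Γ(y+β) + (1-β) * (log (y+β) + log Γ(y+β))
  have key : Real.log (Real.Gamma y * (y ^ β * 2 ^ (β - 1))) ≤ Real.log (Real.Gamma (y + β)) := by
    rw [Real.log_mul hΓy.ne' (by positivity), Real.log_mul (by positivity) (by positivity),
      Real.log_rpow hy0, Real.log_rpow two_pos]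
    have h2y : Real.log (y + β) ≤ Real.log 2 + Real.log y := by
      rw [← Real.log_mul two_ne_zero hy0.ne']
      exact Real.log_le_log (by linarith) (by linarith)
    nlinarith [hcv, Real.log_nonneg hy, Real.log_nonneg (one_le_two (α := ℝ))]
  calc Real.Gamma y * (y ^ β * 2 ^ (β - 1))
      = Real.exp (Real.log (Real.Gamma y * (y ^ β * 2 ^ (β - 1)))) :=
        (Real.exp_log (by positivity)).symm
    _ ≤ Real.exp (Real.log (Real.Gamma (y + β))) := Real.exp_le_exp.2 key
    _ = Real.Gamma (y + β) := Real.exp_log hΓx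

lemma mlSummable {β x : ℝ} (hβ : 0 < β) (hβ1 : β ≤ 1) (hx : 0 ≤ x) :
    Summable (fun k : ℕ => x ^ k / Real.Gamma (β * k + 1)) := by
  rcases eq_or_lt_of_le hx with h | hx
  · apply summable_of_ne_finset_zero (s := ({0} : Finset ℕ))
    intro k hk
    simp only [Finset.mem_singleton] at hk
    rw [← h, zero_pow hk, zero_div]
  · apply summable_of_ratio_norm_eventually_le (r := 1/2) (by norm_num)
    have htend : Filter.Tendsto (fun k : ℕ => (β * k + 1) ^ β) Filter.atTop Filter.atTop := by
      apply (tendsto_rpow_atTop hβ).comp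
      apply Filter.tendsto_atTop_add_const_right
      exact (tendsto_natCast_atTop_atTop (R := ℝ)).const_mul_atTop hβ
    filter_upwards [htend.eventually_ge_atTop ((2:ℝ) ^ (2 - β) * x)] with k hk
    have hy1 : (1:ℝ) ≤ β * k + 1 := by nlinarith [hβ.le, Nat.cast_nonneg (α := ℝ) k]
    have hΓ : 0 < Real.Gamma (β * k + 1) := Real.Gamma_pos_of_pos (by linarith)
    have hΓ' : 0 < Real.Gamma (β * (k + 1 : ℕ) + 1) := Real.Gamma_pos_of_pos (by positivity)
    have hratio := gammaRatio hβ hβ1 hy1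
    have harg : β * ((k:ℝ) + 1) + 1 = (β * k + 1) + β := by ring
    have hlow : Real.Gamma (β * k + 1) * (2 * x) ≤ Real.Gamma (β * (k + 1 : ℕ) + 1) := by
      push_cast
      rw [harg]
      refine le_trans ?_ hratio
      have h22 : (2:ℝ) ^ (2 - β) * x * (2:ℝ) ^ (β - 1) = 2 * x := by
        rw [mul_right_comm, ← Real.rpow_add two_pos]
        norm_num
      have : (2:ℝ) ^ (2 - β) * x * (2:ℝ) ^ (β - 1) ≤ (β * k + 1) ^ β * 2 ^ (β - 1) := by
        apply mul_le_mul_of_nonneg_right hk (by positivity)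
      rw [h22] at this
      exact mul_le_mul_of_nonneg_left this hΓ.le
    rw [Real.norm_eq_abs, Real.norm_eq_abs, abs_of_nonneg (by positivity),
      abs_of_nonneg (by positivity)]
    rw [div_le_iff₀ hΓ']
    calc x ^ (k + 1) = (x ^ k / Real.Gamma (β * k + 1)) * (Real.Gamma (β * k + 1) * x) := by
          field_simp; ring
      _ ≤ (x ^ k / Real.Gamma (β * k + 1)) * (Real.Gamma (β * (k+1:ℕ) + 1) / 2) := by
          apply mul_le_mul_of_nonneg_left _ (by positivity)
          rw [le_div_iff₀ two_pos]
          calc Real.Gamma (β * k + 1) * x * 2 = Real.Gamma (β * k + 1) * (2 * x) := by ring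
            _ ≤ _ := hlow
      _ = 1 / 2 * (x ^ k / Real.Gamma (β * k + 1)) * Real.Gamma (β * (k+1:ℕ) + 1) := by ring

lemma mlNonneg {β x : ℝ} (hβ : 0 < β) (hx : 0 ≤ x) : 0 ≤ mittagLeffler β x :=
  tsum_nonneg fun k => div_nonneg (by positivity)
    (Real.Gamma_pos_of_pos (by positivity)).le

lemma mlMono {β x y : ℝ} (hβ : 0 < β) (hβ1 : β ≤ 1) (hx : 0 ≤ x) (hxy : x ≤ y) :
    mittagLeffler β x ≤ mittagLeffler β y := by
  apply Summable.tsum_le_tsum _ (mlSummable hβ hβ1 hx) (mlSummable hβ hβ1 (hx.trans hxy))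
  intro k
  have hΓ := Real.Gamma_pos_of_pos (show (0:ℝ) < β * k + 1 by positivity)
  gcongr

/-- Gronwall-type estimate with singular kernel: if `u : [0,T] → [0,∞)` is measurable and
bounded with `u(t) ≤ a + b ∫_0^t (t − τ)^(2α−2) u(τ) dτ` on `[0, T]`, then for any
`γ > b Γ(2α−1)`, `sup_{[0,T]} u ≤ (a / (1 − b Γ(2α−1)/γ)) E_{2α−1}(γ T^(2α−1))`. -/
theorem gronwall_singular_kernel (α T a b : ℝ) (hα : α ∈ Set.Ioo (1 / 2 : ℝ) 1)
    (hT : 0 < T) (ha : 0 ≤ a) (hb : 0 ≤ b)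
    (u : ℝ → ℝ) (hmeas : Measurable u)
    (hnonneg : ∀ t ∈ Set.Icc (0:ℝ) T, 0 ≤ u t)
    (hbdd : ∃ M : ℝ, ∀ t ∈ Set.Icc (0:ℝ) T, u t ≤ M)
    (hineq : ∀ t ∈ Set.Icc (0:ℝ) T,
      u t ≤ a + b * ∫ τ in (0:ℝ)..t, (t - τ) ^ (2 * α - 2) * u τ)
    (γ : ℝ) (hγ : b * Real.Gamma (2 * α - 1) < γ) :
    ∀ t ∈ Set.Icc (0:ℝ) T,
      u t ≤ a / (1 - b * Real.Gamma (2 * α - 1) / γ) *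
        mittagLeffler (2 * α - 1) (γ * T ^ (2 * α - 1)) := by
  obtain ⟨hα1, hα2⟩ := hα
  have hβ : 0 < 2 * α - 1 := by linarith
  have hβ1 : 2 * α - 1 ≤ 1 := by linarith
  have hΓβ : 0 < Real.Gamma (2 * α - 1) := Real.Gamma_pos_of_pos hβ
  set c : ℝ := b * Real.Gamma (2 * α - 1) with hcdef
  have hc0 : 0 ≤ c := mul_nonneg hb hΓβ.le
  have hγ0 : 0 < γ := lt_of_le_of_lt hc0 hγ
  obtain ⟨M₀, hM₀⟩ := hbdd
  set M : ℝ := max M₀ 0 with hMdef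
  have hM : ∀ t ∈ Set.Icc (0:ℝ) T, u t ≤ M := fun t ht => (hM₀ t ht).trans (le_max_left _ _)
  have hM0 : 0 ≤ M := le_max_right _ _
  clear_value c M
  have hΓpos : ∀ k : ℕ, (0:ℝ) < Real.Gamma ((2 * α - 1) * k + 1) :=
    fun k => Real.Gamma_pos_of_pos (by positivity)
  -- the key iterated inequality
  have key : ∀ n : ℕ, ∀ t ∈ Set.Icc (0:ℝ) T,
      u t ≤ a * ∑ k ∈ Finset.range n,
              c ^ k * t ^ ((2 * α - 1) * k) / Real.Gamma ((2 * α - 1) * k + 1)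
            + M * (c ^ n * t ^ ((2 * α - 1) * n) / Real.Gamma ((2 * α - 1) * n + 1)) := by
    intro n
    induction n with
    | zero =>
      intro t ht
      simpa [Real.Gamma_one] using hM t ht
    | succ n ih =>
      intro t ht
      obtain ⟨ht0, htT⟩ := ht
      rcases eq_or_lt_of_le ht0 with hteq | htpos
      · -- t = 0
        subst hteq
        have h0 : u 0 ≤ a := by
          have := hineq 0 ⟨le_refl _, hT.le⟩
          simpa using this
        have hsum : ∑ k ∈ Finset.range (n+1),
            c ^ k * (0:ℝ) ^ ((2 * α - 1) * k) / Real.Gamma ((2 * α - 1) * k + 1) = 1 := by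
          rw [Finset.sum_range_succ']
          have hz : ∀ k ∈ Finset.range n,
              c ^ (k+1) * (0:ℝ) ^ ((2 * α - 1) * ((k:ℕ)+1 : ℕ)) /
                Real.Gamma ((2 * α - 1) * ((k:ℕ)+1 : ℕ) + 1) = 0 := by
            intro k _
            rw [Real.zero_rpow (by positivity)]
            simp
          rw [Finset.sum_eq_zero hz]
          simp [Real.Gamma_one]
        rw [hsum]
        have hlast : (0:ℝ) ^ ((2 * α - 1) * ((n:ℕ)+1 : ℕ)) = 0 :=
          Real.zero_rpow (by positivity)
        rw [hlast]
        simpa using h0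
      · -- 0 < t
        have hsub : Set.Icc (0:ℝ) t ⊆ Set.Icc (0:ℝ) T := Set.Icc_subset_Icc le_rfl htT
        -- kernel integrability against powers
        have hker : ∀ s : ℝ, 0 ≤ s → IntervalIntegrable
            (fun τ => (t - τ) ^ (2 * α - 2) * τ ^ s) MeasureTheory.volume 0 t := by
          intro s hs
          have := kernelInt (p := 2 * α - 1) (q := s) (t := t) hβ hs
          simpa [show 2 * α - 1 - 1 = 2 * α - 2 from by ring] using this
        -- integral values
        have hI : ∀ s : ℝ, 0 ≤ s → (∫ τ in (0:ℝ)..t, (t - τ) ^ (2 * α - 2) * τ ^ s) =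
            Real.Gamma (2 * α - 1) * Real.Gamma (s + 1) / Real.Gamma (2 * α + s) *
              t ^ (2 * α + s - 1) := by
          intro s hs
          have := betaInt (p := 2 * α - 1) (s := s + 1) hβ (by linarith) htpos
          simpa [show 2 * α - 1 - 1 = 2 * α - 2 from by ring,
            show s + 1 - 1 = s from by ring,
            show 2 * α - 1 + (s + 1) = 2 * α + s from by ring] using this
        -- the comparison function
        set g : ℝ → ℝ := fun τ => a * ∑ k ∈ Finset.range n,
              c ^ k * τ ^ ((2 * α - 1) * k) / Real.Gamma ((2 * α - 1) * k + 1)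
            + M * (c ^ n * τ ^ ((2 * α - 1) * n) / Real.Gamma ((2 * α - 1) * n + 1)) with hgdef
        have hgu : ∀ τ ∈ Set.Icc (0:ℝ) t, u τ ≤ g τ := fun τ hτ => ih τ (hsub hτ)
        -- rewrite K·g as a sum of kernel-power terms
        have hfun : ∀ τ : ℝ, (t - τ) ^ (2 * α - 2) * g τ =
            (∑ k ∈ Finset.range n, (a * c ^ k / Real.Gamma ((2 * α - 1) * k + 1)) *
              ((t - τ) ^ (2 * α - 2) * τ ^ ((2 * α - 1) * k)))
            + (M * c ^ n / Real.Gamma ((2 * α - 1) * n + 1)) *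
              ((t - τ) ^ (2 * α - 2) * τ ^ ((2 * α - 1) * n)) := by
          intro τ
          rw [hgdef]
          simp only [mul_add, Finset.mul_sum]
          congr 1
          · exact Finset.sum_congr rfl fun k _ => by ring
          · ring
        have hterms : ∀ k : ℕ, IntervalIntegrable (fun τ =>
            (a * c ^ k / Real.Gamma ((2 * α - 1) * k + 1)) *
              ((t - τ) ^ (2 * α - 2) * τ ^ ((2 * α - 1) * k))) MeasureTheory.volume 0 t :=
          fun k => (hker _ (by positivity)).const_mul _
        have hsumInt : IntervalIntegrable (fun τ => ∑ k ∈ Finset.range n,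
            (a * c ^ k / Real.Gamma ((2 * α - 1) * k + 1)) *
              ((t - τ) ^ (2 * α - 2) * τ ^ ((2 * α - 1) * k))) MeasureTheory.volume 0 t := by
          have heq : (fun τ => ∑ k ∈ Finset.range n,
              (a * c ^ k / Real.Gamma ((2 * α - 1) * k + 1)) *
                ((t - τ) ^ (2 * α - 2) * τ ^ ((2 * α - 1) * k)))
              = ∑ k ∈ Finset.range n, fun τ =>
              (a * c ^ k / Real.Gamma ((2 * α - 1) * k + 1)) *
                ((t - τ) ^ (2 * α - 2) * τ ^ ((2 * α - 1) * k)) := by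
            funext τ; rw [Finset.sum_apply]
          rw [heq]
          exact IntervalIntegrable.sum _ (fun k _ => hterms k)
        have hlastInt : IntervalIntegrable (fun τ =>
            (M * c ^ n / Real.Gamma ((2 * α - 1) * n + 1)) *
              ((t - τ) ^ (2 * α - 2) * τ ^ ((2 * α - 1) * n))) MeasureTheory.volume 0 t :=
          (hker _ (by positivity)).const_mul _
        have hIg : IntervalIntegrable (fun τ => (t - τ) ^ (2 * α - 2) * g τ)
            MeasureTheory.volume 0 t := by
          rw [show (fun τ => (t - τ) ^ (2 * α - 2) * g τ) = fun τ =>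
            (∑ k ∈ Finset.range n, (a * c ^ k / Real.Gamma ((2 * α - 1) * k + 1)) *
              ((t - τ) ^ (2 * α - 2) * τ ^ ((2 * α - 1) * k)))
            + (M * c ^ n / Real.Gamma ((2 * α - 1) * n + 1)) *
              ((t - τ) ^ (2 * α - 2) * τ ^ ((2 * α - 1) * n)) from funext hfun]
          exact hsumInt.add hlastInt
        have hIu : IntervalIntegrable (fun τ => (t - τ) ^ (2 * α - 2) * u τ)
            MeasureTheory.volume 0 t := by
          have hK : IntervalIntegrable (fun τ => M * (t - τ) ^ (2 * α - 2))
              MeasureTheory.volume 0 t := by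
            have := hker 0 le_rfl
            simpa [Real.rpow_zero] using this.const_mul M
          apply hK.mono_fun'
          · apply Measurable.aestronglyMeasurable
            exact ((measurable_const.sub measurable_id).pow measurable_const).mul hmeas
          · rw [Filter.EventuallyLE, MeasureTheory.ae_restrict_iff' measurableSet_uIoc]
            apply Filter.Eventually.of_forall
            intro τ hτ
            rw [Set.uIoc_of_le ht0] at hτ
            have hτ' : τ ∈ Set.Icc (0:ℝ) T := ⟨hτ.1.le, hτ.2.trans htT⟩
            have hKnn : (0:ℝ) ≤ (t - τ) ^ (2 * α - 2) :=
              Real.rpow_nonneg (by linarith [hτ.2]) _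
            have : |(t - τ) ^ (2 * α - 2) * u τ| = (t - τ) ^ (2 * α - 2) * u τ :=
              abs_of_nonneg (mul_nonneg hKnn (hnonneg τ hτ'))
            rw [Real.norm_eq_abs, this, mul_comm M]
            exact mul_le_mul_of_nonneg_left (hM τ hτ') hKnn
        -- main chain
        have hmono : (∫ τ in (0:ℝ)..t, (t - τ) ^ (2 * α - 2) * u τ) ≤
            ∫ τ in (0:ℝ)..t, (t - τ) ^ (2 * α - 2) * g τ := by
          apply intervalIntegral.integral_mono_on ht0 hIu hIg
          intro τ hτ
          have hKnn : (0:ℝ) ≤ (t - τ) ^ (2 * α - 2) :=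
            Real.rpow_nonneg (by linarith [hτ.2]) _
          exact mul_le_mul_of_nonneg_left (hgu τ hτ) hKnn
        have hval : (∫ τ in (0:ℝ)..t, (t - τ) ^ (2 * α - 2) * g τ) =
            (∑ k ∈ Finset.range n, (a * c ^ k / Real.Gamma ((2 * α - 1) * k + 1)) *
              (Real.Gamma (2 * α - 1) * Real.Gamma ((2 * α - 1) * k + 1) /
                Real.Gamma (2 * α + (2 * α - 1) * k) * t ^ (2 * α + (2 * α - 1) * k - 1)))
            + (M * c ^ n / Real.Gamma ((2 * α - 1) * n + 1)) *
              (Real.Gamma (2 * α - 1) * Real.Gamma ((2 * α - 1) * n + 1) /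
                Real.Gamma (2 * α + (2 * α - 1) * n) * t ^ (2 * α + (2 * α - 1) * n - 1)) := by
          rw [intervalIntegral.integral_congr (g := fun τ =>
            (∑ k ∈ Finset.range n, (a * c ^ k / Real.Gamma ((2 * α - 1) * k + 1)) *
              ((t - τ) ^ (2 * α - 2) * τ ^ ((2 * α - 1) * k)))
            + (M * c ^ n / Real.Gamma ((2 * α - 1) * n + 1)) *
              ((t - τ) ^ (2 * α - 2) * τ ^ ((2 * α - 1) * n))) (fun τ _ => hfun τ)]
          rw [intervalIntegral.integral_add hsumInt hlastInt]
          rw [intervalIntegral.integral_finset_sum (fun k _ => hterms k)]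
          congr 1
          · apply Finset.sum_congr rfl
            intro k _
            rw [intervalIntegral.integral_const_mul, hI _ (by positivity)]
          · rw [intervalIntegral.integral_const_mul, hI _ (by positivity)]
        calc u t ≤ a + b * ∫ τ in (0:ℝ)..t, (t - τ) ^ (2 * α - 2) * u τ :=
              hineq t ⟨ht0, htT⟩
          _ ≤ a + b * ∫ τ in (0:ℝ)..t, (t - τ) ^ (2 * α - 2) * g τ := by
              have := mul_le_mul_of_nonneg_left hmono hb
              linarith
          _ = a * ∑ k ∈ Finset.range (n+1),
                c ^ k * t ^ ((2 * α - 1) * k) / Real.Gamma ((2 * α - 1) * k + 1)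
              + M * (c ^ (n+1) * t ^ ((2 * α - 1) * (n+1:ℕ)) /
                  Real.Gamma ((2 * α - 1) * (n+1:ℕ) + 1)) := by
              rw [hval, Finset.sum_range_succ']
              have hz : ∀ k : ℕ, (2 * α + (2 * α - 1) * k) = (2 * α - 1) * ((k:ℝ) + 1) + 1 := by
                intro k; ring
              have hz2 : ∀ k : ℕ, (2 * α + (2 * α - 1) * k - 1) = (2 * α - 1) * ((k:ℝ) + 1) := by
                intro k; ring
              push_cast
              have hterm : ∀ k ∈ Finset.range n,
                  b * ((a * c ^ k / Real.Gamma ((2 * α - 1) * k + 1)) *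
                    (Real.Gamma (2 * α - 1) * Real.Gamma ((2 * α - 1) * k + 1) /
                      Real.Gamma (2 * α + (2 * α - 1) * k) * t ^ (2 * α + (2 * α - 1) * k - 1)))
                  = a * (c ^ (k+1) * t ^ ((2 * α - 1) * ((k:ℝ) + 1)) /
                      Real.Gamma ((2 * α - 1) * ((k:ℝ) + 1) + 1)) := by
                intro k _
                rw [hz2 k, hz k, hcdef]
                have h1 := (hΓpos k).ne'
                have h2 := (Real.Gamma_pos_of_pos
                  (show (0:ℝ) < (2 * α - 1) * ((k:ℝ)+1) + 1 by positivity)).ne'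
                field_simp
                ring
              have htermM :
                  b * ((M * c ^ n / Real.Gamma ((2 * α - 1) * n + 1)) *
                    (Real.Gamma (2 * α - 1) * Real.Gamma ((2 * α - 1) * n + 1) /
                      Real.Gamma (2 * α + (2 * α - 1) * n) * t ^ (2 * α + (2 * α - 1) * n - 1)))
                  = M * (c ^ (n+1) * t ^ ((2 * α - 1) * ((n:ℝ) + 1)) /
                      Real.Gamma ((2 * α - 1) * ((n:ℝ) + 1) + 1)) := by
                rw [hz2 n, hz n, hcdef]
                have h1 := (hΓpos n).ne'
                have h2 := (Real.Gamma_pos_of_pos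
                  (show (0:ℝ) < (2 * α - 1) * ((n:ℝ)+1) + 1 by positivity)).ne'
                field_simp
                ring
              have hf0 : c ^ 0 * t ^ ((2 * α - 1) * ((0:ℕ):ℝ)) /
                  Real.Gamma ((2 * α - 1) * ((0:ℕ):ℝ) + 1) = 1 := by
                simp [Real.Gamma_one]
              rw [mul_add, Finset.mul_sum, Finset.sum_congr rfl hterm, htermM]
              rw [mul_add a, Finset.mul_sum]
              push_cast
              simp only [mul_zero, Real.rpow_zero, zero_add, Real.Gamma_one, one_mul, div_one,
                pow_zero]
              ring
          _ = _ := by push_cast; ring_nf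
  -- pass to the limit
  intro t ht
  have ht0 := ht.1
  have hx0 : 0 ≤ c * t ^ (2 * α - 1) := mul_nonneg hc0 (Real.rpow_nonneg ht0 _)
  have hsum := mlSummable hβ hβ1 hx0
  have hpow : ∀ n : ℕ, c ^ n * t ^ ((2 * α - 1) * n) = (c * t ^ (2 * α - 1)) ^ n := by
    intro n
    rw [mul_pow, ← Real.rpow_natCast (t ^ (2 * α - 1)) n, ← Real.rpow_mul ht0]
  have hseq : Filter.Tendsto (fun n : ℕ => a * ∑ k ∈ Finset.range n,
      (c * t ^ (2 * α - 1)) ^ k / Real.Gamma ((2 * α - 1) * k + 1)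
      + M * ((c * t ^ (2 * α - 1)) ^ n / Real.Gamma ((2 * α - 1) * n + 1)))
      Filter.atTop (nhds (a * mittagLeffler (2 * α - 1) (c * t ^ (2 * α - 1)) + M * 0)) := by
    rw [mittagLeffler]
    exact (hsum.hasSum.tendsto_sum_nat.const_mul a).add
      (hsum.tendsto_atTop_zero.const_mul M)
  have hle : u t ≤ a * mittagLeffler (2 * α - 1) (c * t ^ (2 * α - 1)) + M * 0 := by
    apply ge_of_tendsto hseq
    apply Filter.Eventually.of_forall
    intro n
    have hkey := key n t ht
    simpa only [hpow] using hkey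
  rw [mul_zero, add_zero] at hle
  have hmono1 : mittagLeffler (2 * α - 1) (c * t ^ (2 * α - 1)) ≤
      mittagLeffler (2 * α - 1) (γ * T ^ (2 * α - 1)) :=
    mlMono hβ hβ1 hx0 (mul_le_mul hγ.le (Real.rpow_le_rpow ht0 ht.2 hβ.le)
      (Real.rpow_nonneg ht0 _) hγ0.le)
  have hd : 0 < 1 - c / γ := by
    have : c / γ < 1 := (div_lt_one hγ0).2 hγ
    linarith
  have haa : a ≤ a / (1 - c / γ) := by
    rw [le_div_iff₀ hd]
    nlinarith [div_nonneg hc0 hγ0.le]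
  calc u t ≤ a * mittagLeffler (2 * α - 1) (c * t ^ (2 * α - 1)) := hle
    _ ≤ a * mittagLeffler (2 * α - 1) (γ * T ^ (2 * α - 1)) :=
        mul_le_mul_of_nonneg_left hmono1 ha
    _ ≤ a / (1 - c / γ) * mittagLeffler (2 * α - 1) (γ * T ^ (2 * α - 1)) :=
        mul_le_mul_of_nonneg_right haa
          (mlNonneg hβ (mul_nonneg hγ0.le (Real.rpow_nonneg hT.le _)))
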